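/- Let W ≅ D_n with n ≥ 6 even, realized in Sym(2n) as W = SN with S ≅ Sym(n) and N the even sign changes, and let W̄ = W/N ≅ Sym(n). Suppose {s₁,…,s_n} is a string C-group representation of W. Then no sᵢ lies in the center Z(W). -/

import Mathlib

/-- `βᵢ` generators of the standard copy of the Coxeter group `Dₙ` inside `Sym(2n)`
(realized as permutations of `ℕ`, moving only points in `{1,…,2n}`). -/
def beta (n i : ℕ) : Equiv.Perm ℕ :=
  if i = 0 then Equiv.swap 1 (n + 1) * Equiv.swap 2 (n + 2)
  else Equiv.swap i (i + 1) * Equiv.swap (n + i) (n + i + 1)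

/-- The standard copy of the Coxeter group `Dₙ` in `Sym(2n)`, generated by `β₀,…,β_{n-1}`. -/
def Dn (n : ℕ) : Subgroup (Equiv.Perm ℕ) :=
  Subgroup.closure {g | ∃ i < n, g = beta n i}

namespace Stmt18Aux
open Equiv

lemma swap_conj (g : Perm ℕ) (x y : ℕ) : g * Equiv.swap x y * g⁻¹ = Equiv.swap (g x) (g y) :=
  (Equiv.swap_apply_apply g x y).symm

lemma conj_mul' (g a b : Perm ℕ) : g * (a * b) * g⁻¹ = (g * a * g⁻¹) * (g * b * g⁻¹) := by group

lemma swap2_apply {a b c d : ℕ} (h1 : a ≠ c) (h2 : a ≠ d) (h3 : b ≠ c) (h4 : b ≠ d)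
    (hab : a ≠ b) (hcd : c ≠ d) (x : ℕ) :
    (Equiv.swap a b * Equiv.swap c d) x =
      if x = a then b else if x = b then a else if x = c then d else if x = d then c else x := by
  simp only [Perm.mul_apply, Equiv.swap_apply_def]
  split_ifs <;> omega

lemma swap2_commute {a b c d : ℕ} (h1 : a ≠ c) (h2 : a ≠ d) (h3 : b ≠ c) (h4 : b ≠ d) :
    Commute (Equiv.swap a b) (Equiv.swap c d) := by
  apply Equiv.ext
  intro x
  simp only [Perm.mul_apply, Equiv.swap_apply_def]
  split_ifs <;> omega

lemma swap2_sq {a b c d : ℕ} (h1 : a ≠ c) (h2 : a ≠ d) (h3 : b ≠ c) (h4 : b ≠ d) :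
    (Equiv.swap a b * Equiv.swap c d) * (Equiv.swap a b * Equiv.swap c d) = 1 := by
  have h := swap2_commute h1 h2 h3 h4
  calc Equiv.swap a b * Equiv.swap c d * (Equiv.swap a b * Equiv.swap c d)
      = Equiv.swap a b * (Equiv.swap c d * Equiv.swap a b) * Equiv.swap c d := by group
    _ = Equiv.swap a b * (Equiv.swap a b * Equiv.swap c d) * Equiv.swap c d := by rw [h.symm.eq]
    _ = (Equiv.swap a b * Equiv.swap a b) * (Equiv.swap c d * Equiv.swap c d) := by group
    _ = 1 := by rw [Equiv.swap_mul_self, Equiv.swap_mul_self, one_mul]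

/-- the diagonal "transposition" (j k)(n+j n+k) -/
def tau (n j k : ℕ) : Perm ℕ := Equiv.swap j k * Equiv.swap (n + j) (n + k)

/-- the double sign change ε_a ε_b -/
def eps (n a b : ℕ) : Perm ℕ := Equiv.swap a (n + a) * Equiv.swap b (n + b)

lemma tau_apply {n j k : ℕ} (hj : 1 ≤ j) (hjk : j ≠ k) (hk : 1 ≤ k) (hkn : k ≤ n) (hjn : j ≤ n)
    (x : ℕ) : tau n j k x =
      if x = j then k else if x = k then j else if x = n + j then n + k
      else if x = n + k then n + j else x := by
  unfold tau; rw [swap2_apply] <;> omega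

lemma eps_apply {n a b : ℕ} (ha : 1 ≤ a) (hab : a ≠ b) (hb : 1 ≤ b) (han : a ≤ n) (hbn : b ≤ n)
    (x : ℕ) : eps n a b x =
      if x = a then n + a else if x = n + a then a else if x = b then n + b
      else if x = n + b then b else x := by
  unfold eps; rw [swap2_apply] <;> omega

lemma beta_mem {n i : ℕ} (h : i < n) : beta n i ∈ Dn n :=
  Subgroup.subset_closure ⟨i, h, rfl⟩

lemma beta_pos {n i : ℕ} (h : 1 ≤ i) :
    beta n i = Equiv.swap i (i + 1) * Equiv.swap (n + i) (n + i + 1) := by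
  unfold beta; rw [if_neg (by omega)]

lemma beta_zero (n : ℕ) : beta n 0 = eps n 1 2 := rfl

lemma tau_inv {n j k : ℕ} (hj : 1 ≤ j) (hjk : j < k) (hkn : k ≤ n) :
    (tau n j k)⁻¹ = tau n j k := by
  rw [inv_eq_iff_mul_eq_one]; exact swap2_sq (by omega) (by omega) (by omega) (by omega)

lemma tau_mem {n : ℕ} : ∀ k j, 1 ≤ j → j < k → k ≤ n → tau n j k ∈ Dn n := by
  intro k
  induction k with
  | zero => omega
  | succ k ih =>
    intro j h1 h2 h3
    rcases Nat.lt_or_ge j k with hlt | hge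
    · -- tau n j (k+1) = beta n k * tau n j k * beta n k
      have hk1 : 1 ≤ k := by omega
      have hmem : beta n k * tau n j k * (beta n k)⁻¹ ∈ Dn n := by
        have hb := beta_mem (n := n) (i := k) (by omega)
        exact mul_mem (mul_mem hb (ih j h1 hlt (by omega))) (inv_mem hb)
      have heq : beta n k * tau n j k * (beta n k)⁻¹ = tau n j (k+1) := by
        rw [beta_pos hk1]
        unfold tau
        rw [conj_mul', swap_conj, swap_conj]
        rw [swap2_apply (a := k) (b := k+1) (c := n+k) (d := n+k+1) (by omega) (by omega)
          (by omega) (by omega) (by omega) (by omega)]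
        rw [swap2_apply (a := k) (b := k+1) (c := n+k) (d := n+k+1) (by omega) (by omega)
          (by omega) (by omega) (by omega) (by omega)]
        rw [swap2_apply (a := k) (b := k+1) (c := n+k) (d := n+k+1) (by omega) (by omega)
          (by omega) (by omega) (by omega) (by omega)]
        rw [swap2_apply (a := k) (b := k+1) (c := n+k) (d := n+k+1) (by omega) (by omega)
          (by omega) (by omega) (by omega) (by omega)]
        have e1 : (if j = k then k + 1 else if j = k + 1 then k else if j = n + k then n + k + 1
            else if j = n + k + 1 then n + k else j) = j := by split_ifs <;> omega
        have e2 : (if k = k then k + 1 else if k = k + 1 then k else if k = n + k then n + k + 1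
            else if k = n + k + 1 then n + k else k) = k + 1 := by split_ifs <;> omega
        have e3 : (if n + j = k then k + 1 else if n + j = k + 1 then k
            else if n + j = n + k then n + k + 1 else if n + j = n + k + 1 then n + k
            else n + j) = n + j := by split_ifs <;> omega
        have e4 : (if n + k = k then k + 1 else if n + k = k + 1 then k
            else if n + k = n + k then n + k + 1 else if n + k = n + k + 1 then n + k
            else n + k) = n + k + 1 := by split_ifs <;> omega
        rw [e1, e2, e3, e4]
        norm_num [Nat.add_assoc]
      rwa [heq] at hmem
    · -- j = k
      have hjk : j = k := by omega
      subst hjk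
      have : tau n j (j+1) = beta n j := by
        rw [beta_pos h1]; unfold tau; rfl
      rw [this]; exact beta_mem (by omega)


lemma conj_swap2 (g : Perm ℕ) {a b c d a' b' c' d' : ℕ} (ha : g a = a') (hb : g b = b')
    (hc : g c = c') (hd : g d = d') :
    g * (Equiv.swap a b * Equiv.swap c d) * g⁻¹ = Equiv.swap a' b' * Equiv.swap c' d' := by
  rw [conj_mul', swap_conj, swap_conj, ha, hb, hc, hd]

/-- ε₂ε₃ = τ₁₃ β₀ τ₁₃⁻¹ ∈ Dₙ -/
lemma eps23_mem {n : ℕ} (hn : 6 ≤ n) : eps n 2 3 ∈ Dn n := by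
  have ht : tau n 1 3 ∈ Dn n := tau_mem 3 1 (by omega) (by omega) (by omega)
  have hmem : tau n 1 3 * beta n 0 * (tau n 1 3)⁻¹ ∈ Dn n :=
    mul_mem (mul_mem ht (beta_mem (by omega))) (inv_mem ht)
  have tapp : ∀ x, tau n 1 3 x = if x = 1 then 3 else if x = 3 then 1 else if x = n + 1
      then n + 3 else if x = n + 3 then n + 1 else x :=
    tau_apply (by omega) (by omega) (by omega) (by omega) (by omega)
  have h1 : tau n 1 3 1 = 3 := by rw [tapp]; split_ifs <;> omega
  have h2 : tau n 1 3 (n+1) = n + 3 := by rw [tapp]; split_ifs <;> omega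
  have h3 : tau n 1 3 2 = 2 := by rw [tapp]; split_ifs <;> omega
  have h4 : tau n 1 3 (n+2) = n + 2 := by rw [tapp]; split_ifs <;> omega
  have heq : tau n 1 3 * beta n 0 * (tau n 1 3)⁻¹ = eps n 2 3 := by
    rw [beta_zero]
    unfold eps
    rw [conj_swap2 (tau n 1 3) h1 h2 h3 h4]
    exact (swap2_commute (by omega) (by omega) (by omega) (by omega)).eq.symm
  rwa [heq] at hmem

set_option maxHeartbeats 1000000 in
/-- for 3 ≤ a < b ≤ n : ε_a ε_b = (τ₁ₐ τ₂_b) β₀ (…)⁻¹ -/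
lemma eps_conj_beta0 {n a b : ℕ} (hn : 6 ≤ n) (ha : 3 ≤ a) (hab : a < b) (hb : b ≤ n) :
    (tau n 1 a * tau n 2 b) * beta n 0 * (tau n 1 a * tau n 2 b)⁻¹ = eps n a b := by
  have t1 : ∀ x, tau n 1 a x = if x = 1 then a else if x = a then 1 else if x = n + 1
      then n + a else if x = n + a then n + 1 else x :=
    tau_apply (by omega) (by omega) (by omega) (by omega) (by omega)
  have t2 : ∀ x, tau n 2 b x = if x = 2 then b else if x = b then 2 else if x = n + 2
      then n + b else if x = n + b then n + 2 else x :=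
    tau_apply (by omega) (by omega) (by omega) (by omega) (by omega)
  have h1 : (tau n 1 a * tau n 2 b) 1 = a := by
    simp only [Perm.mul_apply]; rw [t2, t1]; split_ifs <;> omega
  have h2 : (tau n 1 a * tau n 2 b) (n+1) = n + a := by
    simp only [Perm.mul_apply]; rw [t2, t1]; split_ifs <;> omega
  have h3 : (tau n 1 a * tau n 2 b) 2 = b := by
    simp only [Perm.mul_apply]; rw [t2, t1]; split_ifs <;> omega
  have h4 : (tau n 1 a * tau n 2 b) (n+2) = n + b := by
    simp only [Perm.mul_apply]; rw [t2, t1]; split_ifs <;> omega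
  rw [beta_zero]
  unfold eps
  rw [conj_swap2 (tau n 1 a * tau n 2 b) h1 h2 h3 h4]

/-- permutations fixing 0 and everything above 2n -/
def fixedFar (n : ℕ) : Subgroup (Perm ℕ) where
  carrier := {g | ∀ x, x = 0 ∨ 2 * n < x → g x = x}
  one_mem' := fun x _ => rfl
  mul_mem' := by
    intro a b ha hb x hx
    simp only [Perm.mul_apply]
    rw [hb x hx, ha x hx]
  inv_mem' := by
    intro a ha x hx
    have := ha x hx
    calc a⁻¹ x = a⁻¹ (a x) := by rw [this]
    _ = x := Equiv.symm_apply_apply a x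

lemma Dn_le_fixedFar {n : ℕ} (hn : 2 ≤ n) : Dn n ≤ fixedFar n := by
  apply Subgroup.closure_le _ |>.2
  rintro g ⟨i, hi, rfl⟩
  intro x hx
  unfold beta
  split_ifs with h
  · rw [swap2_apply (a:=1) (b:=n+1) (c:=2) (d:=n+2) (by omega) (by omega) (by omega) (by omega)
      (by omega) (by omega)]
    split_ifs <;> omega
  · rw [swap2_apply (a:=i) (b:=i+1) (c:=n+i) (d:=n+i+1) (by omega) (by omega) (by omega)
      (by omega) (by omega) (by omega)]
    split_ifs <;> omega

/-- partial products of the central element z -/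
def zf (n : ℕ) : ℕ → Perm ℕ
  | 0 => 1
  | (M+1) => eps n (2*M+1) (2*M+2) * zf n M

lemma zf_apply {n : ℕ} : ∀ M, 2 * M ≤ n → ∀ x, zf n M x =
    if 1 ≤ x ∧ x ≤ 2 * M then n + x else if n + 1 ≤ x ∧ x ≤ n + 2 * M then x - n else x := by
  intro M
  induction M with
  | zero =>
    intro _ x
    simp only [zf, Perm.one_apply]
    split_ifs <;> omega
  | succ M ih =>
    intro hM x
    have h2M : 2 * M ≤ n := by omega
    simp only [zf, Perm.mul_apply]
    rw [ih h2M x]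
    rw [eps_apply (n:=n) (a:=2*M+1) (b:=2*M+2) (by omega) (by omega) (by omega) (by omega) (by omega)]
    split_ifs <;> omega

lemma beta1_apply {n : ℕ} (hn : 6 ≤ n) (x : ℕ) :
    beta n 1 x = if x = 1 then 2 else if x = 2 then 1 else if x = n + 1 then n + 2
      else if x = n + 2 then n + 1 else x := by
  rw [beta_pos (le_refl 1)]
  rw [swap2_apply (a := 1) (b := 2) (c := n+1) (d := n+2) (by omega) (by omega) (by omega)
    (by omega) (by omega) (by omega)]

lemma beta0_sq {n : ℕ} (hn : 6 ≤ n) :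
    (eps n 2 3 * beta n 1) * (eps n 2 3 * beta n 1) = beta n 0 := by
  have e : ∀ y, eps n 2 3 y = if y = 2 then n + 2 else if y = n + 2 then 2 else if y = 3
      then n + 3 else if y = n + 3 then 3 else y :=
    eps_apply (by omega) (by omega) (by omega) (by omega) (by omega)
  have b0 : ∀ y, beta n 0 y = if y = 1 then n + 1 else if y = n + 1 then 1 else if y = 2
      then n + 2 else if y = n + 2 then 2 else y := by
    intro y
    rw [beta_zero]
    exact eps_apply (by omega) (by omega) (by omega) (by omega) (by omega) y
  apply Equiv.ext
  intro x
  simp only [Equiv.Perm.mul_apply]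
  by_cases hxe1 : x = 1
  · subst hxe1
    rw [show beta n 1 1 = 2 by rw [beta1_apply hn]; split_ifs <;> omega]
    rw [show eps n 2 3 2 = n+2 by rw [e]; split_ifs <;> omega]
    rw [show beta n 1 (n+2) = n+1 by rw [beta1_apply hn]; split_ifs <;> omega]
    rw [show eps n 2 3 (n+1) = n+1 by rw [e]; split_ifs <;> omega]
    rw [show beta n 0 1 = n+1 by rw [b0]; split_ifs <;> omega]

  by_cases hxe2 : x = 2
  · subst hxe2
    rw [show beta n 1 2 = 1 by rw [beta1_apply hn]; split_ifs <;> omega]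
    rw [show eps n 2 3 1 = 1 by rw [e]; split_ifs <;> omega]
    rw [show beta n 1 1 = 2 by rw [beta1_apply hn]; split_ifs <;> omega]
    rw [show eps n 2 3 2 = n+2 by rw [e]; split_ifs <;> omega]
    rw [show beta n 0 2 = n+2 by rw [b0]; split_ifs <;> omega]

  by_cases hxe3 : x = 3
  · subst hxe3
    rw [show beta n 1 3 = 3 by rw [beta1_apply hn]; split_ifs <;> omega]
    rw [show eps n 2 3 3 = n+3 by rw [e]; split_ifs <;> omega]
    rw [show beta n 1 (n+3) = n+3 by rw [beta1_apply hn]; split_ifs <;> omega]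
    rw [show eps n 2 3 (n+3) = 3 by rw [e]; split_ifs <;> omega]
    rw [show beta n 0 3 = 3 by rw [b0]; split_ifs <;> omega]

  by_cases hxenp1 : x = n + 1
  · subst hxenp1
    rw [show beta n 1 (n+1) = n+2 by rw [beta1_apply hn]; split_ifs <;> omega]
    rw [show eps n 2 3 (n+2) = 2 by rw [e]; split_ifs <;> omega]
    rw [show beta n 1 2 = 1 by rw [beta1_apply hn]; split_ifs <;> omega]
    rw [show eps n 2 3 1 = 1 by rw [e]; split_ifs <;> omega]
    rw [show beta n 0 (n+1) = 1 by rw [b0]; split_ifs <;> omega]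

  by_cases hxenp2 : x = n + 2
  · subst hxenp2
    rw [show beta n 1 (n+2) = n+1 by rw [beta1_apply hn]; split_ifs <;> omega]
    rw [show eps n 2 3 (n+1) = n+1 by rw [e]; split_ifs <;> omega]
    rw [show beta n 1 (n+1) = n+2 by rw [beta1_apply hn]; split_ifs <;> omega]
    rw [show eps n 2 3 (n+2) = 2 by rw [e]; split_ifs <;> omega]
    rw [show beta n 0 (n+2) = 2 by rw [b0]; split_ifs <;> omega]

  by_cases hxenp3 : x = n + 3
  · subst hxenp3
    rw [show beta n 1 (n+3) = n+3 by rw [beta1_apply hn]; split_ifs <;> omega]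
    rw [show eps n 2 3 (n+3) = 3 by rw [e]; split_ifs <;> omega]
    rw [show beta n 1 3 = 3 by rw [beta1_apply hn]; split_ifs <;> omega]
    rw [show eps n 2 3 3 = n+3 by rw [e]; split_ifs <;> omega]
    rw [show beta n 0 (n+3) = n+3 by rw [b0]; split_ifs <;> omega]
  -- generic point
  rw [show beta n 1 x = x by rw [beta1_apply hn]; split_ifs <;> omega]
  rw [show eps n 2 3 x = x by rw [e]; split_ifs <;> omega]
  rw [show beta n 1 x = x by rw [beta1_apply hn]; split_ifs <;> omega]
  rw [show eps n 2 3 x = x by rw [e]; split_ifs <;> omega]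
  rw [show beta n 0 x = x by rw [b0]; split_ifs <;> omega]

variable {G : Type*} [Group G]

lemma cover_of_gen (H : Subgroup G) (c : G)
    (hc : ∀ g, c * g = g * c) (hc2 : c * c = 1) (S : Set G)
    (hS : ∀ x ∈ S, x ∈ H ∨ c * x ∈ H) (hgenS : Subgroup.closure S = ⊤) :
    ∀ w, w ∈ H ∨ c * w ∈ H := by
  have hcinv : c⁻¹ = c := inv_eq_of_mul_eq_one_right hc2
  let K : Subgroup G :=
  { carrier := {w | w ∈ H ∨ c * w ∈ H}
    one_mem' := Or.inl H.one_mem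
    mul_mem' := by
      rintro a b (ha | ha) (hb | hb)
      · exact Or.inl (H.mul_mem ha hb)
      · refine Or.inr ?_
        have he : c * (a * b) = a * (c * b) := by rw [← mul_assoc, hc a, mul_assoc]
        rw [he]; exact H.mul_mem ha hb
      · refine Or.inr ?_
        have he : c * (a * b) = (c * a) * b := by rw [mul_assoc]
        rw [he]; exact H.mul_mem ha hb
      · refine Or.inl ?_
        have he : a * b = (c * a) * (c * b) := by
          have : (c * a) * (c * b) = c * (a * c) * b := by group
          rw [this, ← hc a]
          have : c * (c * a) * b = (c * c) * (a * b) := by group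
          rw [this, hc2, one_mul]
        rw [he]; exact H.mul_mem ha hb
    inv_mem' := by
      rintro a (ha | ha)
      · exact Or.inl (H.inv_mem ha)
      · refine Or.inr ?_
        have he : c * a⁻¹ = (c * a)⁻¹ := by rw [mul_inv_rev, hcinv, ← hc a⁻¹]
        rw [he]; exact H.inv_mem ha }
  have hle : Subgroup.closure S ≤ K := (Subgroup.closure_le K).2 hS
  intro w
  rw [hgenS] at hle
  exact hle (Subgroup.mem_top w)

lemma sq_mem_of_cover (H : Subgroup G) (c : G)
    (hc : ∀ g, c * g = g * c) (hc2 : c * c = 1)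
    (hcover : ∀ w, w ∈ H ∨ c * w ∈ H) : ∀ w, w * w ∈ H := by
  intro w
  rcases hcover w with h | h
  · exact H.mul_mem h h
  · have h2 := H.mul_mem h h
    have he : (c * w) * (c * w) = w * w := by
      have : (c * w) * (c * w) = c * (w * c) * w := by group
      rw [this, ← hc w]
      have : c * (c * w) * w = (c * c) * (w * w) := by group
      rw [this, hc2, one_mul]
    rwa [he] at h2

lemma conj_mem_of_cover (H : Subgroup G) (c : G)
    (hc : ∀ g, c * g = g * c) (hc2 : c * c = 1)
    (hcover : ∀ w, w ∈ H ∨ c * w ∈ H) :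
    ∀ g w, w ∈ H → g * w * g⁻¹ ∈ H := by
  intro g w hw
  rcases hcover g with h | h
  · exact H.mul_mem (H.mul_mem h hw) (H.inv_mem h)
  · have h2 := H.mul_mem (H.mul_mem h hw) (H.inv_mem h)
    have he : (c * g) * w * (c * g)⁻¹ = g * w * g⁻¹ := by
      have : (c * g) * w * (c * g)⁻¹ = c * (g * w * g⁻¹) * c⁻¹ := by group
      rw [this, hc (g * w * g⁻¹), mul_inv_cancel_right]
    rwa [he] at h2


end Stmt18Aux

/-- For a tuple `s : Fin r → G` and `J ⊆ {1,…,r}`, the subgroup `G_J = ⟨sⱼ : j ∈ J⟩`. -/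
def subJ {G : Type*} [Group G] {r : ℕ} (s : Fin r → G) (J : Set (Fin r)) : Subgroup G :=
  Subgroup.closure (s '' J)

/-- The intersection property `G_J ⊓ G_K = G_{J ∩ K}` holds for all subsets `J, K` of `A`;
`IsCOn s Set.univ` says that `(⟨s⟩, s)` is a string C-group provided `s` is a string
group generated by involutions. -/
def IsCOn {G : Type*} [Group G] {r : ℕ} (s : Fin r → G) (A : Set (Fin r)) : Prop :=
  ∀ J ⊆ A, ∀ K ⊆ A, subJ s J ⊓ subJ s K = subJ s (J ∩ K)

open Stmt18Aux Equiv

/-- For even `n ≥ 6` and `W ≅ Dₙ`, if `{s₁,…,sₙ}` is a string C-group representation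
of `W`, then no `sᵢ` lies in the center `Z(W)`. -/
theorem stmt18 (n : ℕ) (hn : 6 ≤ n) (he : Even n) (s : Fin n → (Dn n))
    (hinv : ∀ i, orderOf (s i) = 2)
    (hgen : Subgroup.closure (Set.range s) = ⊤)
    (hcomm : ∀ i j : Fin n, (i : ℕ) + 2 ≤ (j : ℕ) ∨ (j : ℕ) + 2 ≤ (i : ℕ) →
      Commute (s i) (s j))
    (hC : IsCOn s Set.univ) :
    ∀ i, s i ∉ Subgroup.center (Dn n) := by
  intro i hcen0
  classical
  set H : Subgroup (Dn n) := subJ s (Set.univ \ {i}) with hHdef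
  -- Step A : s i ∉ H
  have hIinter : subJ s {i} ⊓ H = ⊥ := by
    have h := hC {i} (Set.subset_univ _) (Set.univ \ {i}) (Set.subset_univ _)
    have hset : ({i} : Set (Fin n)) ∩ (Set.univ \ {i}) = ∅ := by
      ext j
      simp only [Set.mem_inter_iff, Set.mem_singleton_iff, Set.mem_diff, Set.mem_univ,
        true_and, Set.mem_empty_iff_false, iff_false, not_and, not_not]
      exact fun h => h
    rw [hset] at h
    rw [← hHdef] at h
    rw [h]
    unfold subJ
    rw [Set.image_empty, Subgroup.closure_empty]
  have hsne1 : s i ≠ 1 := by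
    intro h
    have h2 := hinv i
    rw [h, orderOf_one] at h2
    omega
  have hsiH : s i ∉ H := by
    intro h
    have hmem : s i ∈ subJ s {i} ⊓ H :=
      ⟨Subgroup.subset_closure (Set.mem_image_of_mem s (Set.mem_singleton i)), h⟩
    rw [hIinter] at hmem
    exact hsne1 (Subgroup.mem_bot.1 hmem)
  -- centrality data
  have hc2 : s i * s i = 1 := by
    have h := pow_orderOf_eq_one (s i)
    rw [hinv i, pow_two] at h
    exact h
  have hcen : ∀ g : Dn n, s i * g = g * s i := fun g =>
    (Subgroup.mem_center_iff.1 hcen0 g).symm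
  -- cover property
  have hcover : ∀ w : Dn n, w ∈ H ∨ s i * w ∈ H := by
    refine cover_of_gen H (s i) hcen hc2 (Set.range s) ?_ hgen
    rintro _ ⟨j, rfl⟩
    by_cases hj : j = i
    · subst hj
      exact Or.inr (by rw [hc2]; exact H.one_mem)
    · refine Or.inl (Subgroup.subset_closure (Set.mem_image_of_mem s ?_))
      exact ⟨Set.mem_univ j, fun h => hj h⟩
  have hsq := sq_mem_of_cover H (s i) hcen hc2 hcover
  have hconj := conj_mem_of_cover H (s i) hcen hc2 hcover
  -- pass to permutation level
  set H' : Subgroup (Perm ℕ) := H.map (Dn n).subtype with hH'def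
  have hsq' : ∀ p : Perm ℕ, p ∈ Dn n → p * p ∈ H' := by
    intro p hp
    exact Subgroup.mem_map.2 ⟨(⟨p, hp⟩ : Dn n) * ⟨p, hp⟩, hsq _, rfl⟩
  have hconj' : ∀ g, g ∈ Dn n → ∀ p, p ∈ H' → g * p * g⁻¹ ∈ H' := by
    intro g hg p hp
    rcases Subgroup.mem_map.1 hp with ⟨w, hw, rfl⟩
    exact Subgroup.mem_map.2 ⟨(⟨g, hg⟩ : Dn n) * w * (⟨g, hg⟩ : Dn n)⁻¹, hconj _ _ hw, rfl⟩
  have hsiH' : ((s i : Dn n) : Perm ℕ) ∉ H' := by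
    intro h
    exact hsiH ((Subgroup.mem_map_iff_mem (Dn n).subtype_injective).1 h)
  -- β₀ ∈ H'
  have hb0H' : beta n 0 ∈ H' := by
    have hg : eps n 2 3 ∈ Dn n := eps23_mem hn
    have hb1 : beta n 1 ∈ Dn n := beta_mem (by omega)
    have hp := hsq' _ (mul_mem hg hb1)
    rwa [beta0_sq hn] at hp
  -- zf n M ∈ H'
  have hzf : ∀ M, 2 * M ≤ n → zf n M ∈ H' := by
    intro M
    induction M with
    | zero => intro _; simpa [zf] using H'.one_mem
    | succ M ih =>
      intro hM
      have hze : eps n (2*M+1) (2*M+2) ∈ H' := by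
        rcases Nat.eq_zero_or_pos M with h0 | h0
        · subst h0
          have : eps n (2*0+1) (2*0+2) = beta n 0 := by rw [beta_zero]
          rw [this]
          exact hb0H'
        · have hgd : tau n 1 (2*M+1) * tau n 2 (2*M+2) ∈ Dn n :=
            mul_mem (tau_mem _ _ (by omega) (by omega) (by omega))
              (tau_mem _ _ (by omega) (by omega) (by omega))
          have h := hconj' _ hgd _ hb0H'
          rwa [eps_conj_beta0 hn (by omega) (by omega) (by omega)] at h
      have : zf n (M+1) = eps n (2*M+1) (2*M+2) * zf n M := rfl
      rw [this]
      exact H'.mul_mem hze (ih (by omega))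
  -- center pointwise argument
  set c : Perm ℕ := ((s i : Dn n) : Perm ℕ) with hcdef
  have hcp : ∀ p, p ∈ Dn n → ∀ x, c (p x) = p (c x) := by
    intro p hp x
    have h := hcen ⟨p, hp⟩
    have h2 : c * p = p * c := congrArg Subtype.val h
    calc c (p x) = (c * p) x := rfl
    _ = (p * c) x := by rw [h2]
    _ = p (c x) := rfl
  have hfix : ∀ x, x = 0 ∨ 2 * n < x → c x = x :=
    Dn_le_fixedFar (by omega) (s i : Dn n).2
  have hrange : ∀ x, 1 ≤ x → x ≤ 2 * n → 1 ≤ c x ∧ c x ≤ 2 * n := by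
    intro x h1 h2
    by_contra hcon
    have hbad : c x = 0 ∨ 2 * n < c x := by omega
    have h3 := hfix (c x) hbad
    have h4 := c.injective h3
    omega
  -- the key exclusion lemma
  have key : ∀ j k, 2 ≤ j → j < k → k ≤ n →
      c 1 ≠ j ∧ c 1 ≠ k ∧ c 1 ≠ n + j ∧ c 1 ≠ n + k := by
    intro j k hj hjk hk
    have hmem := tau_mem (n := n) k j (by omega) hjk hk
    have h := hcp _ hmem 1
    have t : ∀ y, tau n j k y = if y = j then k else if y = k then j else if y = n + j
        then n + k else if y = n + k then n + j else y :=
      tau_apply (by omega) (by omega) (by omega) (by omega) (by omega)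
    have t1 : tau n j k 1 = 1 := by rw [t]; split_ifs <;> omega
    rw [t1, t (c 1)] at h
    split_ifs at h <;> omega
  have ha : c 1 = 1 ∨ c 1 = n + 1 := by
    by_contra hcon
    push_neg at hcon
    obtain ⟨h1, h2⟩ := hcon
    have hr := hrange 1 (by omega) (by omega)
    have hwit : ∃ j k, 2 ≤ j ∧ j < k ∧ k ≤ n ∧
        (c 1 = j ∨ c 1 = k ∨ c 1 = n + j ∨ c 1 = n + k) := by
      rcases le_or_gt (c 1) n with h | h
      · by_cases h' : c 1 < n
        · exact ⟨c 1, c 1 + 1, by omega, by omega, by omega, by omega⟩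
        · exact ⟨n - 1, n, by omega, by omega, by omega, by omega⟩
      · by_cases h' : c 1 - n < n
        · exact ⟨c 1 - n, c 1 - n + 1, by omega, by omega, by omega, by omega⟩
        · exact ⟨n - 1, n, by omega, by omega, by omega, by omega⟩
    obtain ⟨j, k, hj, hjk, hk, hhit⟩ := hwit
    have := key j k hj hjk hk
    omega
  -- value of β₀
  have b0 : ∀ y, beta n 0 y = if y = 1 then n + 1 else if y = n + 1 then 1 else if y = 2
      then n + 2 else if y = n + 2 then 2 else y := by
    intro y
    rw [beta_zero]
    exact eps_apply (by omega) (by omega) (by omega) (by omega) (by omega) y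
  rcases ha with ha1 | ha1
  · -- c = 1, contradiction with s i ≠ 1
    have hlow : ∀ x, 2 ≤ x → x ≤ n → c x = x := by
      intro x h2 hx
      have hmem := tau_mem (n := n) x 1 (by omega) (by omega) hx
      have t : ∀ y, tau n 1 x y = if y = 1 then x else if y = x then 1 else if y = n + 1
          then n + x else if y = n + x then n + 1 else y :=
        tau_apply (by omega) (by omega) (by omega) (by omega) (by omega)
      have t1 : tau n 1 x 1 = x := by rw [t]; split_ifs <;> omega
      have h := hcp _ hmem 1
      rw [t1, ha1, t1] at h
      exact h
    have hn1 : c (n + 1) = n + 1 := by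
      have h := hcp _ (beta_mem (show 0 < n by omega)) 1
      have b1 : beta n 0 1 = n + 1 := by rw [b0]; split_ifs <;> omega
      rw [b1, ha1, b1] at h
      exact h
    have hhigh : ∀ x, n + 2 ≤ x → x ≤ 2 * n → c x = x := by
      intro x h2 hx
      have hmem := tau_mem (n := n) (x - n) 1 (by omega) (by omega) (by omega)
      have t : ∀ y, tau n 1 (x - n) y = if y = 1 then x - n else if y = x - n then 1
          else if y = n + 1 then n + (x - n) else if y = n + (x - n) then n + 1 else y :=
        tau_apply (by omega) (by omega) (by omega) (by omega) (by omega)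
      have t1 : tau n 1 (x - n) (n + 1) = x := by rw [t]; split_ifs <;> omega
      have h := hcp _ hmem (n + 1)
      rw [t1, hn1, t1] at h
      exact h
    have hc1 : c = 1 := by
      apply Equiv.ext
      intro x
      show c x = x
      by_cases h0 : x = 0 ∨ 2 * n < x
      · exact hfix x h0
      push_neg at h0
      by_cases h1 : x = 1
      · rw [h1, ha1]
      by_cases h2 : x ≤ n
      · exact hlow x (by omega) h2
      by_cases h3 : x = n + 1
      · rw [h3, hn1]
      · exact hhigh x (by omega) (by omega)
    apply hsne1
    apply Subtype.ext
    exact hc1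
  · -- c = z, contradiction with s i ∉ H
    have hlow : ∀ x, 1 ≤ x → x ≤ n → c x = n + x := by
      intro x h2 hx
      by_cases h1 : x = 1
      · rw [h1]; exact ha1
      have hmem := tau_mem (n := n) x 1 (by omega) (by omega) hx
      have t : ∀ y, tau n 1 x y = if y = 1 then x else if y = x then 1 else if y = n + 1
          then n + x else if y = n + x then n + 1 else y :=
        tau_apply (by omega) (by omega) (by omega) (by omega) (by omega)
      have t1 : tau n 1 x 1 = x := by rw [t]; split_ifs <;> omega
      have t2 : tau n 1 x (n + 1) = n + x := by rw [t]; split_ifs <;> omega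
      have h := hcp _ hmem 1
      rw [t1, ha1, t2] at h
      exact h
    have hn1 : c (n + 1) = 1 := by
      have h := hcp _ (beta_mem (show 0 < n by omega)) 1
      have b1 : beta n 0 1 = n + 1 := by rw [b0]; split_ifs <;> omega
      have b2 : beta n 0 (n + 1) = 1 := by rw [b0]; split_ifs <;> omega
      rw [b1, ha1, b2] at h
      exact h
    have hhigh : ∀ x, n + 2 ≤ x → x ≤ 2 * n → c x = x - n := by
      intro x h2 hx
      have hmem := tau_mem (n := n) (x - n) 1 (by omega) (by omega) (by omega)
      have t : ∀ y, tau n 1 (x - n) y = if y = 1 then x - n else if y = x - n then 1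
          else if y = n + 1 then n + (x - n) else if y = n + (x - n) then n + 1 else y :=
        tau_apply (by omega) (by omega) (by omega) (by omega) (by omega)
      have t1 : tau n 1 (x - n) (n + 1) = x := by rw [t]; split_ifs <;> omega
      have t2 : tau n 1 (x - n) 1 = x - n := by rw [t]; split_ifs <;> omega
      have h := hcp _ hmem (n + 1)
      rw [t1, hn1, t2] at h
      exact h
    obtain ⟨m, hm⟩ := he
    have hceq : c = zf n m := by
      apply Equiv.ext
      intro x
      rw [zf_apply m (by omega) x]
      by_cases h1 : 1 ≤ x ∧ x ≤ 2 * m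
      · rw [if_pos h1]
        exact hlow x (by omega) (by omega)
      rw [if_neg h1]
      by_cases h2 : n + 1 ≤ x ∧ x ≤ n + 2 * m
      · rw [if_pos h2]
        by_cases h3 : x = n + 1
        · rw [h3, hn1]; omega
        · rw [hhigh x (by omega) (by omega)]
      · rw [if_neg h2]
        exact hfix x (by omega)
    apply hsiH'
    rw [hceq]
    exact hzf m (by omega)
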